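/- Let K be a normalized kernel (K ≥ 0 measurable on ℝ with all absolute moments finite, m₀ = 1, m₁ = 0, m₂ = 1) and n ≥ 1. Given M = (M₀,…,M₂ₙ) ∈ ℝ^{2n+1}, define the auxiliary moments M*ⱼ(σ) = Σ_{k=0}^{j} b_k σ^k (j!/(j−k)!) M_{j−k} for j = 0,…,2n and set P_n(σ;M) = det H_n(M*(σ)). Then the following are equivalent: (i) there exists a unique W = (w₁,u₁,…,w_n,u_n,σ) ∈ Ω (i.e. with all wᵢ > 0, u₁ < ⋯ < u_n, σ > 0) such that Σ_{i=1}^{n} wᵢ Δⱼ(uᵢ,σ) = Mⱼ for all j = 0,…,2n; (ii) there exists a unique σ₀ > 0 such that P_n(σ₀;M) = 0 and the Hankel matrix H_{n−1}(M*(σ₀)) is positive definite. -/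

import Mathlib

open MeasureTheory Finset Matrix Polynomial


section Integration

variable {K : ℝ → ℝ} (hKmeas : Measurable K) (hKnonneg : ∀ ξ, 0 ≤ K ξ)
  (hKint : ∀ j : ℕ, Integrable (fun ξ => |ξ| ^ j * K ξ))

include hKmeas hKnonneg hKint in
lemma integrable_pow_kernel (k : ℕ) : Integrable (fun ξ => ξ ^ k * K ξ) := by
  refine (hKint k).mono' ?_ ?_
  · exact ((measurable_id.pow_const k).mul hKmeas).aestronglyMeasurable
  · refine Filter.Eventually.of_forall fun ξ => ?_
    have : ‖ξ ^ k * K ξ‖ = |ξ| ^ k * K ξ := by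
      rw [Real.norm_eq_abs, abs_mul, abs_pow, abs_of_nonneg (hKnonneg ξ)]
    simp [this]

include hKmeas hKnonneg hKint in
lemma delta_expand {m : ℕ → ℝ} (hm : ∀ j, m j = ∫ ξ, ξ ^ j * K ξ)
    {σ : ℝ} (hσ : 0 < σ) (u : ℝ) (j : ℕ) :
    (∫ ξ, ξ ^ j * (σ⁻¹ * K ((ξ - u) / σ))) =
      ∑ k ∈ Finset.range (j + 1), (j.choose k : ℝ) * u ^ k * σ ^ (j - k) * m (j - k) := by
  have hσ0 : σ ≠ 0 := ne_of_gt hσ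
  set G : ℝ → ℝ := fun t => (u + σ * t) ^ j * K t with hG
  have h1 : (∫ ξ, ξ ^ j * (σ⁻¹ * K ((ξ - u) / σ))) = ∫ ξ, σ⁻¹ * G ((ξ - u) / σ) := by
    congr 1; funext ξ
    have : u + σ * ((ξ - u) / σ) = ξ := by field_simp; ring
    simp only [hG, this]; ring
  have h2 : (∫ ξ, σ⁻¹ * G ((ξ - u) / σ)) = σ⁻¹ * ∫ ξ, G ((ξ - u) / σ) :=
    integral_const_mul _ _
  have h3 : (∫ ξ, G ((ξ - u) / σ)) = ∫ ξ, G (ξ / σ) := by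
    exact integral_sub_right_eq_self (fun ξ => G (ξ / σ)) u
  have h4 : (∫ ξ, G (ξ / σ)) = |σ| • ∫ t, G t := Measure.integral_comp_div G σ
  have h5 : (∫ t, G t) = ∑ k ∈ Finset.range (j + 1),
      (j.choose k : ℝ) * u ^ k * σ ^ (j - k) * m (j - k) := by
    have hGexp : ∀ t, G t = ∑ k ∈ Finset.range (j + 1),
        (j.choose k : ℝ) * u ^ k * σ ^ (j - k) * (t ^ (j - k) * K t) := by
      intro t
      rw [hG]
      simp only [add_pow]
      rw [Finset.sum_mul]
      refine Finset.sum_congr rfl fun k hk => ?_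
      rw [mul_pow]; ring
    rw [funext hGexp, integral_finset_sum]
    · refine Finset.sum_congr rfl fun k hk => ?_
      rw [integral_const_mul, hm]
    · intro k hk
      exact (integrable_pow_kernel hKmeas hKnonneg hKint (j - k)).const_mul _
  rw [h1, h2, h3, h4, h5, abs_of_pos hσ, smul_eq_mul, ← mul_assoc, inv_mul_cancel₀ hσ0, one_mul]

end Integration


section Algebra

lemma desc_choose {j p k : ℕ} (hk : k ≤ p) (hp : p ≤ j) :
    j.descFactorial k * ((j - k).choose (p - k)) * (p - k).factorial = j.descFactorial p := by
  apply Nat.eq_of_mul_eq_mul_right (Nat.factorial_pos (j - p))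
  have h1 : p - k ≤ j - k := by omega
  have h2 : (j - k) - (p - k) = j - p := by omega
  calc j.descFactorial k * ((j - k).choose (p - k)) * (p - k).factorial * (j - p).factorial
      = j.descFactorial k * (((j - k).choose (p - k)) * (p - k).factorial *
          ((j - k) - (p - k)).factorial) := by rw [h2]; ring
    _ = j.descFactorial k * (j - k).factorial := by
        rw [Nat.choose_mul_factorial_mul_factorial h1]
    _ = j.factorial := by
        rw [mul_comm, Nat.factorial_mul_descFactorial (by omega : k ≤ j)]
    _ = j.descFactorial p * (j - p).factorial := by
        rw [mul_comm, Nat.factorial_mul_descFactorial hp]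

variable {b m : ℕ → ℝ}

lemma conv_zero (hm0 : m 0 = 1) (hb0 : b 0 = 1)
    (hb : ∀ k, 1 ≤ k → b k = -∑ l ∈ Finset.Icc 1 k, m l / (l.factorial : ℝ) * b (k - l))
    (p : ℕ) (hp : 1 ≤ p) :
    ∑ k ∈ Finset.range (p + 1), b k * (m (p - k) / ((p - k).factorial : ℝ)) = 0 := by
  have hre : ∑ l ∈ Finset.Icc 1 p, m l / (l.factorial : ℝ) * b (p - l)
      = ∑ k ∈ Finset.range p, b k * (m (p - k) / ((p - k).factorial : ℝ)) := by
    refine Finset.sum_nbij' (fun l => p - l) (fun k => p - k) ?_ ?_ ?_ ?_ ?_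
    · intro l hl; simp only [Finset.mem_Icc] at hl; simp only [Finset.mem_range]; omega
    · intro k hk; simp only [Finset.mem_range] at hk; simp only [Finset.mem_Icc]; omega
    · intro l hl; simp only [Finset.mem_Icc] at hl; omega
    · intro k hk; simp only [Finset.mem_range] at hk; omega
    · intro l hl; simp only [Finset.mem_Icc] at hl
      have : p - (p - l) = l := by omega
      rw [this]; ring
  rw [Finset.sum_range_succ, ← hre]
  have : p - p = 0 := by omega
  rw [this, hm0]
  simp only [Nat.factorial_zero, Nat.cast_one, div_one, mul_one]
  have := hb p hp
  linarith

lemma star_atom (hm0 : m 0 = 1) (hb0 : b 0 = 1)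
    (hconv : ∀ p, 1 ≤ p →
      ∑ k ∈ Finset.range (p + 1), b k * (m (p - k) / ((p - k).factorial : ℝ)) = 0)
    (σ u : ℝ) (j : ℕ) :
    ∑ k ∈ Finset.range (j + 1), b k * σ ^ k * (j.descFactorial k : ℝ) *
      (∑ l ∈ Finset.range (j - k + 1),
        ((j - k).choose l : ℝ) * u ^ l * σ ^ (j - k - l) * m (j - k - l)) = u ^ j := by
  -- reflect the inner sum
  have hinner : ∀ k, k ≤ j →
      (∑ l ∈ Finset.range (j - k + 1),
        ((j - k).choose l : ℝ) * u ^ l * σ ^ (j - k - l) * m (j - k - l))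
      = ∑ l ∈ Finset.range (j - k + 1),
        ((j - k).choose l : ℝ) * u ^ (j - k - l) * σ ^ l * m l := by
    intro k hk
    rw [← Finset.sum_range_reflect]
    refine Finset.sum_congr rfl fun l hl => ?_
    simp only [Finset.mem_range] at hl
    have h1 : j - k + 1 - 1 - l = j - k - l := by omega
    have h2 : j - k - (j - k - l) = l := by omega
    rw [h1, h2, Nat.choose_symm (by omega : l ≤ j - k)]
  set F : ℕ → ℕ → ℝ := fun k l => b k * σ ^ k * (j.descFactorial k : ℝ) *
      (((j - k).choose l : ℝ) * u ^ (j - k - l) * σ ^ l * m l) with hF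
  have hdouble : ∑ k ∈ Finset.range (j + 1), b k * σ ^ k * (j.descFactorial k : ℝ) *
      (∑ l ∈ Finset.range (j - k + 1),
        ((j - k).choose l : ℝ) * u ^ l * σ ^ (j - k - l) * m (j - k - l))
      = ∑ k ∈ Finset.range (j + 1), ∑ l ∈ Finset.range (j + 1 - k), F k l := by
    refine Finset.sum_congr rfl fun k hk => ?_
    simp only [Finset.mem_range] at hk
    rw [hinner k (by omega), Finset.mul_sum]
    have : j - k + 1 = j + 1 - k := by omega
    rw [this]
  rw [hdouble, ← Finset.sum_range_diag_flip (j + 1) F]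
  have hp0 : ∀ p ∈ Finset.range (j + 1),
      (∑ k ∈ Finset.range (p + 1), F k (p - k)) = if p = 0 then u ^ j else 0 := by
    intro p hp
    simp only [Finset.mem_range] at hp
    have hterm : ∀ k ∈ Finset.range (p + 1), F k (p - k) =
        (j.descFactorial p : ℝ) * σ ^ p * u ^ (j - p) *
          (b k * (m (p - k) / ((p - k).factorial : ℝ))) := by
      intro k hk
      simp only [Finset.mem_range] at hk
      have hk' : k ≤ p := by omega
      have hpj : p ≤ j := by omega
      have hcast : (j.descFactorial k : ℝ) * ((j - k).choose (p - k) : ℝ) =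
          (j.descFactorial p : ℝ) / ((p - k).factorial : ℝ) := by
        rw [eq_div_iff (by exact_mod_cast (Nat.factorial_pos (p - k)).ne')]
        exact_mod_cast congrArg (Nat.cast (R := ℝ)) (desc_choose hk' hpj)
      have hjk : j - k - (p - k) = j - p := by omega
      have hσ : σ ^ k * σ ^ (p - k) = σ ^ p := by
        rw [← pow_add]; congr 1; omega
      rw [hF]
      simp only [hjk]
      calc b k * σ ^ k * (j.descFactorial k : ℝ) *
            (((j - k).choose (p - k) : ℝ) * u ^ (j - p) * σ ^ (p - k) * m (p - k))
          = ((j.descFactorial k : ℝ) * ((j - k).choose (p - k) : ℝ)) *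
            (σ ^ k * σ ^ (p - k)) * u ^ (j - p) * (b k * m (p - k)) := by ring
        _ = ((j.descFactorial p : ℝ) / ((p - k).factorial : ℝ)) * σ ^ p * u ^ (j - p) *
            (b k * m (p - k)) := by rw [hcast, hσ]
        _ = (j.descFactorial p : ℝ) * σ ^ p * u ^ (j - p) *
            (b k * (m (p - k) / ((p - k).factorial : ℝ))) := by ring
    rw [Finset.sum_congr rfl hterm, ← Finset.mul_sum]
    by_cases hp1 : p = 0
    · subst hp1
      simp [hm0, hb0]
    · rw [hconv p (by omega), if_neg hp1, mul_zero]
  rw [Finset.sum_congr rfl hp0, Finset.sum_ite_eq' (Finset.range (j + 1)) 0 (fun _ => u ^ j)]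
  simp

lemma transform_atoms (hm0 : m 0 = 1) (hb0 : b 0 = 1)
    (hconv : ∀ p, 1 ≤ p →
      ∑ k ∈ Finset.range (p + 1), b k * (m (p - k) / ((p - k).factorial : ℝ)) = 0)
    (σ : ℝ) {n : ℕ} (w v : Fin n → ℝ) (Δf : ℕ → Fin n → ℝ)
    (hΔf : ∀ j' i, Δf j' i = ∑ l ∈ Finset.range (j' + 1),
      ((j').choose l : ℝ) * (v i) ^ l * σ ^ (j' - l) * m (j' - l)) (j : ℕ) :
    ∑ k ∈ Finset.range (j + 1), b k * σ ^ k * (j.descFactorial k : ℝ) *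
      (∑ i, w i * Δf (j - k) i) = ∑ i, w i * (v i) ^ j := by
  have : ∀ k ∈ Finset.range (j + 1), b k * σ ^ k * (j.descFactorial k : ℝ) *
      (∑ i, w i * Δf (j - k) i)
      = ∑ i, w i * (b k * σ ^ k * (j.descFactorial k : ℝ) * Δf (j - k) i) := by
    intro k _
    rw [Finset.mul_sum]
    refine Finset.sum_congr rfl fun i _ => ?_
    ring
  rw [Finset.sum_congr rfl this, Finset.sum_comm]
  refine Finset.sum_congr rfl fun i _ => ?_
  have : ∀ k ∈ Finset.range (j + 1), w i * (b k * σ ^ k * (j.descFactorial k : ℝ) * Δf (j - k) i)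
      = w i * (b k * σ ^ k * (j.descFactorial k : ℝ) * (∑ l ∈ Finset.range (j - k + 1),
        ((j - k).choose l : ℝ) * (v i) ^ l * σ ^ (j - k - l) * m (j - k - l))) := by
    intro k _; rw [hΔf]
  rw [Finset.sum_congr rfl this, ← Finset.mul_sum,
    star_atom hm0 hb0 hconv σ (v i) j]

lemma transform_inj (hb0 : b 0 = 1) (σ : ℝ) (X Y : ℕ → ℝ) (J : ℕ)
    (h : ∀ j ≤ J, ∑ k ∈ Finset.range (j + 1), b k * σ ^ k * (j.descFactorial k : ℝ) * X (j - k)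
        = ∑ k ∈ Finset.range (j + 1), b k * σ ^ k * (j.descFactorial k : ℝ) * Y (j - k)) :
    ∀ j ≤ J, X j = Y j := by
  intro j
  induction j using Nat.strong_induction_on with
  | _ j ih =>
    intro hj
    have hsplit : ∀ Z : ℕ → ℝ,
        ∑ k ∈ Finset.range (j + 1), b k * σ ^ k * (j.descFactorial k : ℝ) * Z (j - k)
        = (∑ i ∈ Finset.range j,
            b (i + 1) * σ ^ (i + 1) * (j.descFactorial (i + 1) : ℝ) * Z (j - (i + 1))) + Z j := by
      intro Z
      rw [Finset.sum_range_succ']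
      simp [hb0]
    have htail : ∑ i ∈ Finset.range j,
        b (i + 1) * σ ^ (i + 1) * (j.descFactorial (i + 1) : ℝ) * X (j - (i + 1))
        = ∑ i ∈ Finset.range j,
          b (i + 1) * σ ^ (i + 1) * (j.descFactorial (i + 1) : ℝ) * Y (j - (i + 1)) := by
      refine Finset.sum_congr rfl fun i hi => ?_
      simp only [Finset.mem_range] at hi
      rw [ih (j - (i + 1)) (by omega) (by omega)]
    have := h j hj
    rw [hsplit X, hsplit Y, htail] at this
    linarith

end Algebra


section Hankel

variable {n : ℕ}

/-- Quadratic form of a Hankel matrix built from atoms. -/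
lemma hankel_quad_form {ι : Type*} [Fintype ι] (N : ℕ → ℝ) (W t : ι → ℝ)
    (hN : ∀ i j : Fin n, N (i.1 + j.1) = ∑ l, W l * t l ^ (i.1 + j.1)) (x : Fin n → ℝ) :
    x ⬝ᵥ ((Matrix.of fun i j : Fin n => N (i.1 + j.1)) *ᵥ x)
      = ∑ l, W l * (∑ i : Fin n, x i * t l ^ i.1) ^ 2 := by
  simp only [dotProduct, Matrix.mulVec, Matrix.of_apply]
  calc ∑ i : Fin n, x i * ∑ j : Fin n, N (i.1 + j.1) * x j
      = ∑ i : Fin n, ∑ j : Fin n, ∑ l, W l * ((x i * t l ^ i.1) * (x j * t l ^ j.1)) := by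
        refine Finset.sum_congr rfl fun i _ => ?_
        rw [Finset.mul_sum]
        refine Finset.sum_congr rfl fun j _ => ?_
        rw [hN i j, Finset.sum_mul, Finset.mul_sum]
        refine Finset.sum_congr rfl fun l _ => ?_
        rw [pow_add]; ring
    _ = ∑ i : Fin n, ∑ l, ∑ j : Fin n, W l * ((x i * t l ^ i.1) * (x j * t l ^ j.1)) :=
        Finset.sum_congr rfl fun i _ => Finset.sum_comm
    _ = ∑ l, ∑ i : Fin n, ∑ j : Fin n, W l * ((x i * t l ^ i.1) * (x j * t l ^ j.1)) :=
        Finset.sum_comm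
    _ = ∑ l, W l * (∑ i : Fin n, x i * t l ^ i.1) ^ 2 := by
        refine Finset.sum_congr rfl fun l _ => ?_
        rw [sq, Finset.sum_mul_sum, Finset.mul_sum]
        refine Finset.sum_congr rfl fun i _ => ?_
        rw [Finset.mul_sum]
  done

lemma vandermonde_cancel (u : Fin n → ℝ) (hu : Function.Injective u) (x : Fin n → ℝ)
    (hx : ∀ l, ∑ i : Fin n, x i * u l ^ i.1 = 0) : x = 0 := by
  have hdet : (Matrix.vandermonde u).det ≠ 0 :=
    Matrix.det_vandermonde_ne_zero_iff.mpr hu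
  have hmv : Matrix.vandermonde u *ᵥ x = 0 := by
    funext l
    simpa [Matrix.mulVec, dotProduct, Matrix.vandermonde, mul_comm] using hx l
  have := Matrix.eq_zero_of_mulVec_eq_zero hdet hmv
  exact this

lemma hankel_atoms_posdef (N : ℕ → ℝ) (w u : Fin n → ℝ) (hw : ∀ i, 0 < w i)
    (hu : Function.Injective u)
    (hN : ∀ i j : Fin n, N (i.1 + j.1) = ∑ l, w l * u l ^ (i.1 + j.1)) :
    (Matrix.of fun i j : Fin n => N (i.1 + j.1)).PosDef := by
  refine Matrix.PosDef.of_dotProduct_mulVec_pos ?_ ?_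
  · show _ = _
    ext i j
    simp only [Matrix.conjTranspose_apply, Matrix.of_apply, star_trivial]
    congr 1
    omega
  · intro x hx
    rw [star_trivial, hankel_quad_form N w u hN x]
    have hnonneg : ∀ l ∈ Finset.univ (α := Fin n),
        0 ≤ w l * (∑ i : Fin n, x i * u l ^ i.1) ^ 2 :=
      fun l _ => mul_nonneg (hw l).le (sq_nonneg _)
    have hsum0 : 0 ≤ ∑ l, w l * (∑ i : Fin n, x i * u l ^ i.1) ^ 2 :=
      Finset.sum_nonneg hnonneg
    rcases eq_or_lt_of_le hsum0 with heq | hlt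
    · exfalso
      apply hx
      have hall := (Finset.sum_eq_zero_iff_of_nonneg hnonneg).mp heq.symm
      refine vandermonde_cancel u hu x fun l => ?_
      have h0 := hall l (Finset.mem_univ l)
      have := (mul_eq_zero.mp h0).resolve_left (hw l).ne'
      exact pow_eq_zero_iff (n := 2) (by norm_num) |>.mp this
    · exact hlt

lemma poly_coeff_sum_eval {m : ℕ} (q : Polynomial ℝ) (hq : q.natDegree < m) (x : ℝ) :
    ∑ j : Fin m, q.coeff j.1 * x ^ j.1 = q.eval x := by
  rw [eval_eq_sum_range' hq]
  exact Fin.sum_univ_eq_sum_range (fun j => q.coeff j * x ^ j) m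

lemma prod_X_sub_C_natDegree {ι : Type*} [Fintype ι] (t : ι → ℝ) :
    (∏ l, (X - C (t l))).natDegree = Fintype.card ι := by
  rw [Polynomial.natDegree_prod _ _ (fun l _ => X_sub_C_ne_zero (t l))]
  simp [natDegree_X_sub_C]

lemma hankel_atoms_det_zero {ι : Type*} [Fintype ι] (N : ℕ → ℝ) (W t : ι → ℝ)
    (hcard : Fintype.card ι ≤ n)
    (hN : ∀ i j : Fin (n + 1), N (i.1 + j.1) = ∑ l, W l * t l ^ (i.1 + j.1)) :
    (Matrix.of fun i j : Fin (n + 1) => N (i.1 + j.1)).det = 0 := by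
  set q : Polynomial ℝ := ∏ l, (X - C (t l)) with hq
  have hmonic : q.Monic := monic_prod_of_monic _ _ fun l _ => monic_X_sub_C (t l)
  have hdeg : q.natDegree = Fintype.card ι := prod_X_sub_C_natDegree t
  have hdeg' : q.natDegree < n + 1 := by omega
  set c : Fin (n + 1) → ℝ := fun j => q.coeff j.1 with hc
  have hc0 : c ≠ 0 := by
    intro h
    have h1 : c ⟨q.natDegree, hdeg'⟩ = 1 := hmonic.coeff_natDegree
    rw [h] at h1
    simp at h1
  have hroot : ∀ l, q.eval (t l) = 0 := by
    intro l
    rw [hq, eval_prod]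
    exact Finset.prod_eq_zero (Finset.mem_univ l) (by simp)
  have hmv : (Matrix.of fun i j : Fin (n + 1) => N (i.1 + j.1)) *ᵥ c = 0 := by
    funext i
    simp only [Matrix.mulVec, dotProduct, Matrix.of_apply, Pi.zero_apply]
    calc ∑ j : Fin (n + 1), N (i.1 + j.1) * c j
        = ∑ j : Fin (n + 1), ∑ l, W l * t l ^ i.1 * (c j * t l ^ j.1) := by
          refine Finset.sum_congr rfl fun j _ => ?_
          rw [hN i j, Finset.sum_mul]
          refine Finset.sum_congr rfl fun l _ => ?_
          rw [pow_add]; ring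
      _ = ∑ l, W l * t l ^ i.1 * (∑ j : Fin (n + 1), c j * t l ^ j.1) := by
          rw [Finset.sum_comm]
          refine Finset.sum_congr rfl fun l _ => ?_
          rw [Finset.mul_sum]
      _ = 0 := by
          refine Finset.sum_eq_zero fun l _ => ?_
          rw [show (∑ j : Fin (n + 1), c j * t l ^ j.1) = q.eval (t l) from
            poly_coeff_sum_eval q hdeg' (t l), hroot l, mul_zero]
  exact (Matrix.exists_mulVec_eq_zero_iff.mp ⟨c, hc0, hmv⟩)

end Hankel


section Construct

variable {n : ℕ}

lemma real_conjTranspose (A : Matrix (Fin n) (Fin n) ℝ) : Aᴴ = Aᵀ := by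
  ext i j; simp [Matrix.conjTranspose_apply]

open scoped MatrixOrder in
/-- From positive-definiteness of the Hankel matrix `H_{n-1}(N)`, the moments
`N_0, …, N_{2n-1}` are representable by `n` (possibly degenerate) weighted atoms. -/
lemma rep_exists (hn : 0 < n) (N : ℕ → ℝ)
    (hH : (Matrix.of fun i j : Fin n => N (i.1 + j.1)).PosDef) :
    ∃ y lam : Fin n → ℝ, ∀ j, j + 1 ≤ 2 * n → N j = ∑ i, (y i) ^ 2 * (lam i) ^ j := by
  classical
  set H : Matrix (Fin n) (Fin n) ℝ := Matrix.of fun i j : Fin n => N (i.1 + j.1) with hHdef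
  set S : Matrix (Fin n) (Fin n) ℝ := Matrix.of fun i j : Fin n => N (i.1 + j.1 + 1) with hSdef
  have hHsym : Hᵀ = H := by
    ext i j; simp only [hHdef, Matrix.transpose_apply, Matrix.of_apply]; congr 1; omega
  have hSsym : Sᵀ = S := by
    ext i j; simp only [hSdef, Matrix.transpose_apply, Matrix.of_apply]; congr 1; omega
  have hdetH : IsUnit H.det := isUnit_iff_ne_zero.mpr hH.det_pos.ne'
  set C : Matrix (Fin n) (Fin n) ℝ := H⁻¹ * S with hCdef
  have hHC : H * C = S := Matrix.mul_nonsing_inv_cancel_left H S hdetH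
  have hCT : Cᵀ * H = H * C := by
    have h1 : Cᵀ = S * H⁻¹ := by
      rw [hCdef, Matrix.transpose_mul, hSsym, Matrix.transpose_nonsing_inv, hHsym]
    rw [h1, Matrix.nonsing_inv_mul_cancel_right H S hdetH, hHC]
  have hpow : ∀ p : ℕ, (Cᵀ) ^ p * H = H * C ^ p := by
    intro p
    induction p with
    | zero => simp
    | succ p ih =>
      calc (Cᵀ) ^ (p + 1) * H = Cᵀ * ((Cᵀ) ^ p * H) := by rw [pow_succ', mul_assoc]
        _ = Cᵀ * (H * C ^ p) := by rw [ih]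
        _ = (Cᵀ * H) * C ^ p := by rw [mul_assoc]
        _ = H * (C * C ^ p) := by rw [hCT, mul_assoc]
        _ = H * C ^ (p + 1) := by rw [← pow_succ']
  -- basis vectors
  have hCe : ∀ (p : ℕ) (hp : p < n) (hp1 : p + 1 < n),
      C *ᵥ Pi.single (⟨p, hp⟩ : Fin n) 1 = Pi.single (⟨p + 1, hp1⟩ : Fin n) 1 := by
    intro p hp hp1
    have hS : S *ᵥ Pi.single (⟨p, hp⟩ : Fin n) 1
        = H *ᵥ Pi.single (⟨p + 1, hp1⟩ : Fin n) 1 := by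
      rw [Matrix.mulVec_single, Matrix.mulVec_single]
      funext i
      simp only [hSdef, hHdef, Matrix.of_apply, mul_one]
      congr 1
      try omega
    rw [hCdef, ← Matrix.mulVec_mulVec, hS, Matrix.mulVec_mulVec,
      Matrix.nonsing_inv_mul H hdetH, Matrix.one_mulVec]
  have hCpow : ∀ (p : ℕ) (hp : p < n),
      C ^ p *ᵥ Pi.single (⟨0, hn⟩ : Fin n) 1 = Pi.single (⟨p, hp⟩ : Fin n) 1 := by
    intro p
    induction p with
    | zero => intro hp; rw [pow_zero, Matrix.one_mulVec]
    | succ p ih =>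
      intro hp1
      have hp : p < n := by omega
      rw [pow_succ', ← Matrix.mulVec_mulVec, ih hp, hCe p hp hp1]
  -- dot products
  have hdotH : ∀ (p r : ℕ) (hp : p < n) (hr : r < n),
      Pi.single (⟨p, hp⟩ : Fin n) 1 ⬝ᵥ (H *ᵥ Pi.single (⟨r, hr⟩ : Fin n) 1) = N (p + r) := by
    intro p r hp hr
    rw [Matrix.mulVec_single, single_dotProduct]
    simp [hHdef]
  have hdotS : ∀ (p r : ℕ) (hp : p < n) (hr : r < n),
      Pi.single (⟨p, hp⟩ : Fin n) 1 ⬝ᵥ (S *ᵥ Pi.single (⟨r, hr⟩ : Fin n) 1) = N (p + r + 1) := by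
    intro p r hp hr
    rw [Matrix.mulVec_single, single_dotProduct]
    simp [hSdef]
  set e0 : Fin n → ℝ := Pi.single (⟨0, hn⟩ : Fin n) 1 with he0
  -- key identity
  have hkey : ∀ j, j + 1 ≤ 2 * n → e0 ⬝ᵥ ((H * C ^ j) *ᵥ e0) = N j := by
    intro j hj
    by_cases hjn : j < n
    · have h1 : H * C ^ j = (C ^ j)ᵀ * H := by
        rw [Matrix.transpose_pow, hpow j]
      rw [h1, ← Matrix.mulVec_mulVec, Matrix.dotProduct_mulVec, Matrix.vecMul_transpose,
        hCpow j hjn, he0]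
      simpa using hdotH j 0 hjn hn
    · -- n ≤ j ≤ 2n - 1
      have hp : n - 1 < n := by omega
      have hr : j - n < n := by omega
      have h1 : H * C ^ j = (C ^ (n - 1))ᵀ * (S * C ^ (j - n)) := by
        have hsplit : j = (n - 1) + ((j - n) + 1) := by omega
        calc H * C ^ j = H * (C ^ (n - 1) * C ^ ((j - n) + 1)) := by
              rw [← pow_add, ← hsplit]
          _ = (H * C ^ (n - 1)) * C ^ ((j - n) + 1) := by rw [mul_assoc]
          _ = ((Cᵀ) ^ (n - 1) * H) * C ^ ((j - n) + 1) := by rw [hpow]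
          _ = (Cᵀ) ^ (n - 1) * (H * (C * C ^ (j - n))) := by
              rw [pow_succ', mul_assoc]
          _ = (Cᵀ) ^ (n - 1) * ((H * C) * C ^ (j - n)) := by
              rw [← mul_assoc H C _]
          _ = (C ^ (n - 1))ᵀ * (S * C ^ (j - n)) := by
              rw [hHC, ← Matrix.transpose_pow]
      rw [h1, ← Matrix.mulVec_mulVec, Matrix.dotProduct_mulVec, Matrix.vecMul_transpose,
        hCpow (n - 1) hp, ← Matrix.mulVec_mulVec, hCpow (j - n) hr,
        hdotS (n - 1) (j - n) hp hr]
      congr 1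
      omega
  -- square root and symmetrized matrix
  have hPSD := hH.posSemidef
  set R : Matrix (Fin n) (Fin n) ℝ := CFC.sqrt H with hRdef
  have hRherm : R.IsHermitian := (Matrix.nonneg_iff_posSemidef.mp (CFC.sqrt_nonneg H)).1
  have hRsym : Rᵀ = R := by rw [← real_conjTranspose]; exact hRherm
  have hRR : R * R = H := CFC.sqrt_mul_sqrt_self H hPSD.nonneg
  have hdetR : IsUnit R.det := by
    rw [isUnit_iff_ne_zero]
    intro h
    have : H.det = 0 := by rw [← hRR, Matrix.det_mul, h, mul_zero]
    exact hH.det_pos.ne' this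
  set A : Matrix (Fin n) (Fin n) ℝ := R⁻¹ * S * R⁻¹ with hAdef
  have hRinvsym : (R⁻¹)ᵀ = R⁻¹ := by rw [Matrix.transpose_nonsing_inv, hRsym]
  have hAsym : A.IsHermitian := by
    show _ = _
    rw [real_conjTranspose, hAdef, Matrix.transpose_mul, Matrix.transpose_mul, hRinvsym, hSsym,
      mul_assoc]
  have hCARA : C = R⁻¹ * A * R := by
    have e1 : R⁻¹ * A * R = R⁻¹ * R⁻¹ * S := by
      rw [hAdef]
      simp only [mul_assoc]
      rw [Matrix.nonsing_inv_mul R hdetR, mul_one]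
    rw [e1, hCdef, ← hRR, Matrix.mul_inv_rev]
  have hCpowA : ∀ j : ℕ, C ^ j = R⁻¹ * A ^ j * R := by
    intro j
    induction j with
    | zero => rw [pow_zero, pow_zero, mul_one, Matrix.nonsing_inv_mul R hdetR]
    | succ j ih =>
      rw [pow_succ, pow_succ, ih, hCARA]
      simp only [mul_assoc]
      rw [Matrix.mul_nonsing_inv_cancel_left R _ hdetR]
  have hHCj : ∀ j : ℕ, H * C ^ j = R * A ^ j * R := by
    intro j
    rw [hCpowA j, ← hRR]
    simp only [mul_assoc]
    rw [Matrix.mul_nonsing_inv_cancel_left R _ hdetR]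
  -- spectral theorem
  set U : Matrix (Fin n) (Fin n) ℝ := (hAsym.eigenvectorUnitary : Matrix (Fin n) (Fin n) ℝ)
    with hU
  set lam : Fin n → ℝ := hAsym.eigenvalues with hlam
  set D : Matrix (Fin n) (Fin n) ℝ := Matrix.diagonal (RCLike.ofReal ∘ lam) with hD
  have hspec : A = U * D * star U := hAsym.spectral_theorem
  have hUU : star U * U = 1 := Unitary.coe_star_mul_self hAsym.eigenvectorUnitary
  have hUU' : U * star U = 1 := Unitary.coe_mul_star_self hAsym.eigenvectorUnitary
  have hUUl : ∀ X : Matrix (Fin n) (Fin n) ℝ, star U * (U * X) = X := by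
    intro X; rw [← mul_assoc, hUU, one_mul]
  have hApowspec : ∀ j : ℕ, A ^ j = U * D ^ j * star U := by
    intro j
    induction j with
    | zero => rw [pow_zero, pow_zero, mul_one, hUU']
    | succ j ih =>
      rw [pow_succ, pow_succ, ih, hspec]
      simp only [mul_assoc]
      rw [hUUl]
  set v : Fin n → ℝ := R *ᵥ e0 with hv
  set y : Fin n → ℝ := (star U) *ᵥ v with hy
  have hstarU : star U = Uᵀ := by
    rw [Matrix.star_eq_conjTranspose, real_conjTranspose]
  refine ⟨y, lam, ?_⟩
  intro j hj
  have step1 : N j = e0 ⬝ᵥ ((R * A ^ j * R) *ᵥ e0) := by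
    rw [← hHCj j, hkey j hj]
  have hRve : e0 ᵥ* R = v := by
    rw [hv, ← hRsym, Matrix.vecMul_transpose, hRsym]
  have step2 : e0 ⬝ᵥ ((R * A ^ j * R) *ᵥ e0) = v ⬝ᵥ (A ^ j *ᵥ v) := by
    rw [← Matrix.mulVec_mulVec, ← Matrix.mulVec_mulVec, Matrix.dotProduct_mulVec, hRve, ← hv]
  have hvU : v ᵥ* U = y := by
    rw [hy, hstarU, ← Matrix.vecMul_transpose, Matrix.transpose_transpose]
  have hUv : Uᵀ *ᵥ v = y := by rw [hy, hstarU]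
  have step3 : v ⬝ᵥ (A ^ j *ᵥ v) = y ⬝ᵥ (D ^ j *ᵥ y) := by
    rw [hApowspec j, ← Matrix.mulVec_mulVec, ← Matrix.mulVec_mulVec,
      Matrix.dotProduct_mulVec (v) U, hstarU, hvU, hUv]
  have step4 : y ⬝ᵥ (D ^ j *ᵥ y) = ∑ i, (y i) ^ 2 * lam i ^ j := by
    rw [hD, Matrix.diagonal_pow]
    simp only [dotProduct, Matrix.mulVec_diagonal]
    refine Finset.sum_congr rfl fun i _ => ?_
    have : (RCLike.ofReal ∘ lam) i = lam i := by
      simp [Function.comp]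
    rw [Pi.pow_apply, this]
    ring
  rw [step1, step2, step3, step4]

/-- If two moment sequences agree up to `2n-1` and both `(n+1)×(n+1)` Hankel
determinants vanish while `det H_{n-1}(N) ≠ 0`, the `2n`-th moments agree too. -/
lemma pin_last (hn : 0 < n) (N N' : ℕ → ℝ) (hagree : ∀ j, j + 1 ≤ 2 * n → N j = N' j)
    (hdet : (Matrix.of fun i j : Fin (n + 1) => N (i.1 + j.1)).det = 0)
    (hdet' : (Matrix.of fun i j : Fin (n + 1) => N' (i.1 + j.1)).det = 0)
    (hHdet : (Matrix.of fun i j : Fin n => N (i.1 + j.1)).det ≠ 0) :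
    N (2 * n) = N' (2 * n) := by
  classical
  set B : Matrix (Fin (n + 1)) (Fin (n + 1)) ℝ := Matrix.of fun i j => N (i.1 + j.1) with hB
  set r' : Fin (n + 1) → ℝ := fun j => N' (n + j.1) with hr'def
  have hvlt : ∀ i : Fin (n + 1), i ≠ Fin.last n → i.1 < n := by
    intro i hi
    have h1 : i.1 < n + 1 := i.isLt
    have h2 : i.1 ≠ n := fun h => hi (Fin.ext h)
    omega
  have hB' : (Matrix.of fun i j : Fin (n + 1) => N' (i.1 + j.1))
      = Matrix.updateRow B (Fin.last n) r' := by
    ext i j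
    by_cases hi : i = Fin.last n
    · subst hi
      rw [Matrix.updateRow_self]
      simp only [Matrix.of_apply, hr'def]
      rfl
    · rw [Matrix.updateRow_ne hi]
      simp only [Matrix.of_apply, hB]
      exact (hagree _ (by have := hvlt i hi; have := j.isLt; omega)).symm
  set δ : ℝ := N' (2 * n) - N (2 * n) with hδ
  have hrow : r' = B (Fin.last n) + δ • (Pi.single (Fin.last n) 1 : Fin (n + 1) → ℝ) := by
    funext j
    by_cases hj : j = Fin.last n
    · subst hj
      simp only [hr'def, Pi.add_apply, Pi.smul_apply, Pi.single_eq_same, smul_eq_mul, mul_one, hδ]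
      have h1 : n + (Fin.last n).1 = 2 * n := by simp [Fin.last]; omega
      have h2 : (Fin.last n).1 + (Fin.last n).1 = 2 * n := by simp [Fin.last]; omega
      simp only [hB, Matrix.of_apply, h1, h2]
      ring
    · simp only [hr'def, Pi.add_apply, Pi.smul_apply, Pi.single_eq_of_ne hj, smul_eq_mul,
        mul_zero, add_zero, hB, Matrix.of_apply]
      have h1 : (Fin.last n).1 = n := rfl
      rw [h1]
      exact (hagree _ (by have := hvlt j hj; omega)).symm
  have hminor : (Matrix.updateRow B (Fin.last n) (Pi.single (Fin.last n) 1)).det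
      = (Matrix.of fun i j : Fin n => N (i.1 + j.1)).det := by
    rw [Matrix.det_succ_row _ (Fin.last n)]
    rw [Finset.sum_eq_single (Fin.last n)]
    · rw [Matrix.updateRow_self, Pi.single_eq_same, mul_one]
      have hsign : (-1 : ℝ) ^ ((Fin.last n).1 + (Fin.last n).1) = 1 :=
        Even.neg_one_pow (Even.add_self _)
      rw [hsign, one_mul]
      congr 1
      ext i j
      simp only [Matrix.submatrix_apply, Fin.succAbove_last]
      rw [Matrix.updateRow_ne (Fin.castSucc_lt_last i).ne, hB]
      simp only [Matrix.of_apply, Fin.coe_castSucc]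
    · intro j _ hj
      rw [Matrix.updateRow_self, Pi.single_eq_of_ne hj, mul_zero, zero_mul]
    · intro h
      exact absurd (Finset.mem_univ _) h
  have h0 : (0 : ℝ) = 0 + δ * (Matrix.of fun i j : Fin n => N (i.1 + j.1)).det := by
    calc (0 : ℝ) = (Matrix.of fun i j : Fin (n + 1) => N' (i.1 + j.1)).det := hdet'.symm
      _ = (Matrix.updateRow B (Fin.last n) r').det := by rw [hB']
      _ = (Matrix.updateRow B (Fin.last n) (B (Fin.last n))).det
          + δ * (Matrix.updateRow B (Fin.last n) (Pi.single (Fin.last n) 1)).det := by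
          rw [hrow, Matrix.det_updateRow_add, Matrix.det_updateRow_smul]
      _ = 0 + δ * (Matrix.of fun i j : Fin n => N (i.1 + j.1)).det := by
          rw [Matrix.updateRow_eq_self, hminor]
          congr 1
  have : δ = 0 := by
    rcases mul_eq_zero.mp (by linarith : δ * (Matrix.of fun i j : Fin n => N (i.1 + j.1)).det
      = 0) with h | h
    · exact h
    · exact absurd h hHdet
  rw [hδ] at this
  linarith

/-- Main construction: positive definiteness of `H_{n-1}` plus vanishing of
`det H_n` produce `n` distinct atoms with positive weights matching `N₀,…,N_{2n}`. -/
lemma construct_atoms (hn : 0 < n) (N : ℕ → ℝ)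
    (hH : (Matrix.of fun i j : Fin n => N (i.1 + j.1)).PosDef)
    (hdet0 : (Matrix.of fun i j : Fin (n + 1) => N (i.1 + j.1)).det = 0) :
    ∃ w u : Fin n → ℝ, (∀ i, 0 < w i) ∧ StrictMono u ∧
      ∀ j ≤ 2 * n, N j = ∑ i, w i * u i ^ j := by
  classical
  obtain ⟨y, lam, hrep⟩ := rep_exists hn N hH
  set s : Finset (Fin n) := Finset.univ.filter (fun i => y i ≠ 0) with hs
  set T : Finset ℝ := s.image lam with hT
  set W : ℝ → ℝ := fun t => ∑ i ∈ s.filter (fun i => lam i = t), (y i) ^ 2 with hW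
  -- the collapsed representation
  have h1 : ∀ j, j + 1 ≤ 2 * n → N j = ∑ t ∈ T, W t * t ^ j := by
    intro j hj
    rw [hrep j hj]
    have e1 : ∑ i, (y i) ^ 2 * lam i ^ j = ∑ i ∈ s, (y i) ^ 2 * lam i ^ j := by
      rw [hs]
      refine (Finset.sum_filter_of_ne ?_).symm
      intro i _ hne hyi
      exact hne (by rw [hyi]; ring)
    have e2 : ∑ i ∈ s, (y i) ^ 2 * lam i ^ j
        = ∑ t ∈ T, ∑ i ∈ s.filter (fun i => lam i = t), (y i) ^ 2 * lam i ^ j := by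
      rw [hT]
      exact (Finset.sum_fiberwise_of_maps_to (fun i hi => Finset.mem_image_of_mem lam hi) _).symm
    rw [e1, e2]
    refine Finset.sum_congr rfl fun t _ => ?_
    rw [hW, Finset.sum_mul]
    refine Finset.sum_congr rfl fun i hi => ?_
    rw [(Finset.mem_filter.mp hi).2]
  -- cardinality of the support
  have hcard_le : T.card ≤ n := le_trans (Finset.card_image_le) (by
    simpa using Finset.card_filter_le Finset.univ (fun i => y i ≠ 0))
  have hcard_ge : n ≤ T.card := by
    by_contra hlt
    push_neg at hlt
    set ρ : Polynomial ℝ := ∏ t ∈ T, (X - C t) with hρ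
    have hmonic : ρ.Monic := monic_prod_of_monic _ _ fun t _ => monic_X_sub_C t
    have hdeg : ρ.natDegree = T.card := by
      rw [hρ, Polynomial.natDegree_prod _ _ (fun t _ => X_sub_C_ne_zero t)]
      simp [natDegree_X_sub_C]
    have hdeg' : ρ.natDegree < n := by omega
    set x : Fin n → ℝ := fun i => ρ.coeff i.1 with hx
    have hx0 : x ≠ 0 := by
      intro h
      have h1 : x ⟨ρ.natDegree, hdeg'⟩ = 1 := hmonic.coeff_natDegree
      rw [h] at h1
      simp at h1
    have hpos := hH.dotProduct_mulVec_pos hx0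
    rw [star_trivial] at hpos
    have hNq : ∀ i j : Fin n, N (i.1 + j.1) = ∑ l : {t // t ∈ T}, W l.1 * (l.1 : ℝ) ^ (i.1 + j.1) := by
      intro i j
      rw [h1 (i.1 + j.1) (by have := i.isLt; have := j.isLt; omega)]
      exact (Finset.sum_coe_sort T (fun t => W t * t ^ (i.1 + j.1))).symm
    have hquad := hankel_quad_form (n := n) N (fun l : {t // t ∈ T} => W l.1)
      (fun l => l.1) hNq x
    rw [hquad] at hpos
    have hzero : ∑ l : {t // t ∈ T}, W l.1 * (∑ i : Fin n, x i * (l.1 : ℝ) ^ i.1) ^ 2 = 0 := by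
      refine Finset.sum_eq_zero fun l _ => ?_
      have : ∑ i : Fin n, x i * (l.1 : ℝ) ^ i.1 = ρ.eval l.1 := poly_coeff_sum_eval ρ hdeg' l.1
      rw [this]
      have : ρ.eval l.1 = 0 := by
        rw [hρ, eval_prod]
        exact Finset.prod_eq_zero (Finset.mem_coe.mp (by exact_mod_cast l.2) : l.1 ∈ T) (by simp)
      rw [this]
      ring
    rw [hzero] at hpos
    exact lt_irrefl 0 hpos
  have hcard : T.card = n := le_antisymm hcard_le hcard_ge
  -- enumerate the support in increasing order
  set uo := T.orderIsoOfFin hcard with huo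
  set u : Fin n → ℝ := fun i => (uo i : ℝ) with hu
  have humono : StrictMono u := by
    intro a b hab
    exact Subtype.coe_lt_coe.mpr (uo.lt_iff_lt.mpr hab)
  set w : Fin n → ℝ := fun i => W (u i) with hw
  have hsumT : ∀ f : ℝ → ℝ, ∑ t ∈ T, f t = ∑ i : Fin n, f (u i) := by
    intro f
    rw [← Finset.sum_coe_sort T f]
    exact (Fintype.sum_equiv uo.toEquiv _ _ fun i => rfl).symm
  have hwpos : ∀ i, 0 < w i := by
    intro i
    have hmem : (u i) ∈ T := (uo i).2
    obtain ⟨i₀, hi₀s, hi₀⟩ := Finset.mem_image.mp hmem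
    refine Finset.sum_pos' (fun l _ => sq_nonneg _) ⟨i₀, ?_, ?_⟩
    · exact Finset.mem_filter.mpr ⟨hi₀s, hi₀⟩
    · have : y i₀ ≠ 0 := (Finset.mem_filter.mp hi₀s).2
      positivity
  have hrep2n1 : ∀ j, j + 1 ≤ 2 * n → N j = ∑ i, w i * u i ^ j := by
    intro j hj
    rw [h1 j hj, hsumT (fun t => W t * t ^ j)]
  -- the top moment, via the two vanishing determinants
  have hrepfull : ∀ j ≤ 2 * n, N j = ∑ i, w i * u i ^ j := by
    intro j hj
    rcases lt_or_eq_of_le hj with hj' | hj'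
    · exact hrep2n1 j (by omega)
    · subst hj'
      set N' : ℕ → ℝ := fun j => ∑ i, w i * u i ^ j with hN'
      have hagree : ∀ j, j + 1 ≤ 2 * n → N j = N' j := fun j hj => hrep2n1 j hj
      have hdet' : (Matrix.of fun i j : Fin (n + 1) => N' (i.1 + j.1)).det = 0 := by
        refine hankel_atoms_det_zero N' w u (by simp) ?_
        intro i j
        rfl
      exact pin_last hn N N' hagree hdet0 hdet' hH.det_pos.ne'
  exact ⟨w, u, hwpos, humono, hrepfull⟩

end Construct

section Unique

variable {n : ℕ}

lemma coeff_sum_eval_sub (v : Fin n → ℝ) (x : ℝ) :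
    ∑ j : Fin n, (∏ i, (X - C (v i))).coeff j.1 * x ^ j.1
      = (∏ i, (X - C (v i))).eval x - x ^ n := by
  set q : Polynomial ℝ := ∏ i, (X - C (v i)) with hq
  have hmonic : q.Monic := monic_prod_of_monic _ _ fun i _ => monic_X_sub_C (v i)
  have hdeg : q.natDegree = n := by
    rw [hq, prod_X_sub_C_natDegree]
    simp
  have h1 : ∑ j : Fin (n + 1), q.coeff j.1 * x ^ j.1 = q.eval x :=
    poly_coeff_sum_eval q (by omega) x
  rw [Fin.sum_univ_castSucc] at h1
  have h2 : q.coeff (Fin.last n).1 = 1 := by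
    have : (Fin.last n).1 = q.natDegree := by rw [hdeg]; rfl
    rw [this]
    exact hmonic.coeff_natDegree
  simp only [Fin.coe_castSucc, h2, one_mul] at h1
  have h3 : ((Fin.last n) : ℕ) = n := rfl
  rw [h3] at h1
  linarith

lemma atoms_orth (hn : 0 < n) (N : ℕ → ℝ) (v ww : Fin n → ℝ)
    (hrep : ∀ j, j + 1 ≤ 2 * n → ∑ i, ww i * v i ^ j = N j) :
    (Matrix.of fun i j : Fin n => N (i.1 + j.1)) *ᵥ
        (fun k : Fin n => (∏ i, (X - C (v i))).coeff k.1)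
      = fun k : Fin n => -N (n + k.1) := by
  classical
  set q : Polynomial ℝ := ∏ i, (X - C (v i)) with hq
  have hroot : ∀ l, q.eval (v l) = 0 := by
    intro l
    rw [hq, eval_prod]
    exact Finset.prod_eq_zero (Finset.mem_univ l) (by simp)
  funext k
  simp only [Matrix.mulVec, dotProduct, Matrix.of_apply]
  calc ∑ j : Fin n, N (k.1 + j.1) * q.coeff j.1
      = ∑ j : Fin n, ∑ l, ww l * v l ^ k.1 * (q.coeff j.1 * v l ^ j.1) := by
        refine Finset.sum_congr rfl fun j _ => ?_
        rw [← hrep (k.1 + j.1) (by have := k.isLt; have := j.isLt; omega), Finset.sum_mul]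
        refine Finset.sum_congr rfl fun l _ => ?_
        rw [pow_add]; ring
    _ = ∑ l, ww l * v l ^ k.1 * (∑ j : Fin n, q.coeff j.1 * v l ^ j.1) := by
        rw [Finset.sum_comm]
        exact Finset.sum_congr rfl fun l _ => (Finset.mul_sum _ _ _).symm
    _ = ∑ l, ww l * v l ^ k.1 * (0 - v l ^ n) := by
        refine Finset.sum_congr rfl fun l _ => ?_
        rw [coeff_sum_eval_sub v (v l), hroot l]
    _ = -∑ l, ww l * v l ^ (n + k.1) := by
        rw [← Finset.sum_neg_distrib]
        refine Finset.sum_congr rfl fun l _ => ?_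
        rw [pow_add]; ring
    _ = -N (n + k.1) := by rw [hrep (n + k.1) (by have := k.isLt; omega)]

lemma atoms_unique (hn : 0 < n) (N : ℕ → ℝ)
    (hH : (Matrix.of fun i j : Fin n => N (i.1 + j.1)).PosDef)
    (w u w' u' : Fin n → ℝ) (hw : ∀ i, 0 < w i) (hw' : ∀ i, 0 < w' i)
    (hu : StrictMono u) (hu' : StrictMono u')
    (hrep : ∀ j, j + 1 ≤ 2 * n → ∑ i, w i * u i ^ j = N j)
    (hrep' : ∀ j, j + 1 ≤ 2 * n → ∑ i, w' i * u' i ^ j = N j) :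
    w = w' ∧ u = u' := by
  classical
  have hdetH : (Matrix.of fun i j : Fin n => N (i.1 + j.1)).det ≠ 0 := hH.det_pos.ne'
  set q : Polynomial ℝ := ∏ i, (X - C (u i)) with hqd
  set q' : Polynomial ℝ := ∏ i, (X - C (u' i)) with hq'd
  -- the coefficient vectors solve the same nonsingular linear system
  have hmv : (Matrix.of fun i j : Fin n => N (i.1 + j.1)) *ᵥ
      ((fun k : Fin n => q.coeff k.1) - (fun k : Fin n => q'.coeff k.1)) = 0 := by
    rw [Matrix.mulVec_sub, atoms_orth hn N u w hrep, atoms_orth hn N u' w' hrep']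
    simp
  have hcoeff : (fun k : Fin n => q.coeff k.1) = (fun k : Fin n => q'.coeff k.1) := by
    have := Matrix.eq_zero_of_mulVec_eq_zero hdetH hmv
    have h2 := sub_eq_zero.mp this
    exact h2
  -- hence the polynomials agree
  have hmonic : q.Monic := monic_prod_of_monic _ _ fun i _ => monic_X_sub_C _
  have hmonic' : q'.Monic := monic_prod_of_monic _ _ fun i _ => monic_X_sub_C _
  have hdeg : q.natDegree = n := by rw [hqd, prod_X_sub_C_natDegree]; simp
  have hdeg' : q'.natDegree = n := by rw [hq'd, prod_X_sub_C_natDegree]; simp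
  have hqq' : q = q' := by
    ext j
    rcases lt_trichotomy j n with hj | hj | hj
    · exact congrFun hcoeff ⟨j, hj⟩
    · subst hj
      have e1 : q.coeff j = 1 := by rw [← hdeg]; exact hmonic.coeff_natDegree
      have e2 : q'.coeff j = 1 := by rw [← hdeg']; exact hmonic'.coeff_natDegree
      rw [e1, e2]
    · rw [Polynomial.coeff_eq_zero_of_natDegree_lt (by omega : q.natDegree < j),
        Polynomial.coeff_eq_zero_of_natDegree_lt (by omega : q'.natDegree < j)]
  -- equal root sets
  have hTsub : Finset.image u Finset.univ ⊆ Finset.image u' Finset.univ := by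
    intro t ht
    obtain ⟨i, _, rfl⟩ := Finset.mem_image.mp ht
    have h0 : q'.eval (u i) = 0 := by
      rw [← hqq', hqd, eval_prod]
      exact Finset.prod_eq_zero (Finset.mem_univ i) (by simp)
    rw [hq'd, eval_prod] at h0
    obtain ⟨l, _, hl⟩ := Finset.prod_eq_zero_iff.mp h0
    simp only [eval_sub, eval_X, eval_C] at hl
    exact Finset.mem_image.mpr ⟨l, Finset.mem_univ l, (sub_eq_zero.mp hl).symm⟩
  have hcardu : (Finset.image u Finset.univ).card = n := by
    rw [Finset.card_image_of_injective _ hu.injective]; simp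
  have hcardu' : (Finset.image u' Finset.univ).card = n := by
    rw [Finset.card_image_of_injective _ hu'.injective]; simp
  have hTeq : Finset.image u Finset.univ = Finset.image u' Finset.univ :=
    Finset.eq_of_subset_of_card_le hTsub (by omega)
  have huu' : u = u' := by
    have h1 : u = (Finset.image u Finset.univ).orderEmbOfFin hcardu :=
      Finset.orderEmbOfFin_unique hcardu
        (fun i => Finset.mem_image_of_mem u (Finset.mem_univ i)) hu
    have h2 : u' = (Finset.image u Finset.univ).orderEmbOfFin hcardu :=
      Finset.orderEmbOfFin_unique hcardu
        (fun i => hTeq ▸ Finset.mem_image_of_mem u' (Finset.mem_univ i)) hu'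
    rw [h1, h2]
  subst huu'
  refine ⟨?_, rfl⟩
  -- weights agree: Vandermonde system
  have hvdm : ((Matrix.vandermonde u)ᵀ).det ≠ 0 := by
    rw [Matrix.det_transpose]
    exact Matrix.det_vandermonde_ne_zero_iff.mpr hu.injective
  have hmv2 : (Matrix.vandermonde u)ᵀ *ᵥ (w - w') = 0 := by
    funext j
    simp only [Matrix.mulVec, dotProduct, Matrix.transpose_apply, Matrix.vandermonde,
      Pi.sub_apply, Pi.zero_apply, Matrix.of_apply]
    have e1 : ∑ i, u i ^ j.1 * (w i - w' i)
        = (∑ i, w i * u i ^ j.1) - ∑ i, w' i * u i ^ j.1 := by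
      rw [← Finset.sum_sub_distrib]
      refine Finset.sum_congr rfl fun i _ => ?_
      ring
    rw [e1, hrep j.1 (by have := j.isLt; omega), hrep' j.1 (by have := j.isLt; omega), sub_self]
  have := Matrix.eq_zero_of_mulVec_eq_zero hvdm hmv2
  exact sub_eq_zero.mp this

end Unique

/-- For a normalized kernel `K`, `n ≥ 1` and given moments
`M = (M₀,…,M₂ₙ)`, with auxiliary moments `M*ⱼ(σ) = Σ_{k≤j} b_k σ^k (j!/(j−k)!) M_{j−k}`
and `Pₙ(σ;M) = det Hₙ(M*(σ))`, the following are equivalent: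
(i) there is a unique `W = (w,u,σ) ∈ Ω` (all `wᵢ > 0`, `u₁ < ⋯ < u_n`, `σ > 0`)
with `Σᵢ wᵢ Δⱼ(uᵢ,σ) = Mⱼ` for `j = 0,…,2n`;
(ii) there is a unique `σ₀ > 0` with `Pₙ(σ₀;M) = 0` and `H_{n−1}(M*(σ₀))`
positive definite. -/
theorem eqmom_realizability_criterion
    (K : ℝ → ℝ) (hKmeas : Measurable K) (hKnonneg : ∀ ξ, 0 ≤ K ξ)
    (hKint : ∀ j : ℕ, Integrable (fun ξ => |ξ| ^ j * K ξ))
    (m : ℕ → ℝ) (hm : ∀ j, m j = ∫ ξ, ξ ^ j * K ξ)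
    (hm0 : m 0 = 1) (hm1 : m 1 = 0) (hm2 : m 2 = 1)
    (b : ℕ → ℝ) (hb0 : b 0 = 1)
    (hb : ∀ k, 1 ≤ k → b k = -∑ l ∈ Finset.Icc 1 k, m l / (l.factorial : ℝ) * b (k - l))
    (Δ : ℕ → ℝ → ℝ → ℝ)
    (hΔ : ∀ j u σ, Δ j u σ = ∫ ξ, ξ ^ j * (σ⁻¹ * K ((ξ - u) / σ)))
    (n : ℕ) (hn : 1 ≤ n) (M : ℕ → ℝ)
    (Mstar : ℝ → ℕ → ℝ)
    (hMstar : ∀ σ j, Mstar σ j =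
      ∑ k ∈ Finset.range (j + 1), b k * σ ^ k * (j.descFactorial k : ℝ) * M (j - k))
    (P : ℝ → ℝ)
    (hP : ∀ σ, P σ = (Matrix.of fun i j : Fin (n + 1) => Mstar σ (i.1 + j.1)).det) :
    (∃! W : (Fin n → ℝ) × (Fin n → ℝ) × ℝ,
        (∀ i, 0 < W.1 i) ∧ StrictMono W.2.1 ∧ 0 < W.2.2 ∧
        ∀ j ≤ 2 * n, ∑ i, W.1 i * Δ j (W.2.1 i) W.2.2 = M j) ↔
    (∃! σ₀ : ℝ, 0 < σ₀ ∧ P σ₀ = 0 ∧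
        (Matrix.of fun i j : Fin n => Mstar σ₀ (i.1 + j.1)).PosDef) := by
  classical
  have hn0 : 0 < n := hn
  have hconv : ∀ p, 1 ≤ p →
      ∑ k ∈ Finset.range (p + 1), b k * (m (p - k) / ((p - k).factorial : ℝ)) = 0 :=
    conv_zero hm0 hb0 hb
  have hΔexp : ∀ (j : ℕ) (u σ : ℝ), 0 < σ → Δ j u σ =
      ∑ k ∈ Finset.range (j + 1), (j.choose k : ℝ) * u ^ k * σ ^ (j - k) * m (j - k) := by
    intro j u σ hσ
    rw [hΔ]
    exact delta_expand hKmeas hKnonneg hKint hm hσ u j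
  -- the transform of the prescribed moments evaluates on atomic representations
  have hforward : ∀ (w u : Fin n → ℝ) (σ : ℝ), 0 < σ →
      (∀ j ≤ 2 * n, ∑ i, w i * Δ j (u i) σ = M j) →
      ∀ j ≤ 2 * n, Mstar σ j = ∑ i, w i * (u i) ^ j := by
    intro w u σ hσ hM j hj
    rw [hMstar]
    have e1 : ∀ k ∈ Finset.range (j + 1),
        b k * σ ^ k * (j.descFactorial k : ℝ) * M (j - k)
        = b k * σ ^ k * (j.descFactorial k : ℝ) * (∑ i, w i * Δ (j - k) (u i) σ) := by
      intro k hk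
      rw [hM (j - k) (by omega)]
    rw [Finset.sum_congr rfl e1]
    exact transform_atoms hm0 hb0 hconv σ w u (fun j' i => Δ j' (u i) σ)
      (fun j' i => hΔexp j' (u i) σ hσ) j
  -- a solution W yields the right-hand data at its σ
  have hrightOfW : ∀ (w u : Fin n → ℝ) (σ : ℝ), (∀ i, 0 < w i) → StrictMono u → 0 < σ →
      (∀ j ≤ 2 * n, ∑ i, w i * Δ j (u i) σ = M j) →
      P σ = 0 ∧ (Matrix.of fun i j : Fin n => Mstar σ (i.1 + j.1)).PosDef := by
    intro w u σ hw hu hσ hM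
    have hrep := hforward w u σ hσ hM
    constructor
    · rw [hP]
      refine hankel_atoms_det_zero (Mstar σ) w u (by simp) ?_
      intro i j
      exact hrep (i.1 + j.1) (by have := i.isLt; have := j.isLt; omega)
    · refine hankel_atoms_posdef (Mstar σ) w u hw hu.injective ?_
      intro i j
      exact hrep (i.1 + j.1) (by have := i.isLt; have := j.isLt; omega)
  -- conversely, right-hand data at σ₀ yields a solution W with that σ₀
  have hWofσ : ∀ σ₀ : ℝ, 0 < σ₀ → P σ₀ = 0 →
      (Matrix.of fun i j : Fin n => Mstar σ₀ (i.1 + j.1)).PosDef →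
      ∃ w u : Fin n → ℝ, (∀ i, 0 < w i) ∧ StrictMono u ∧
        (∀ j ≤ 2 * n, ∑ i, w i * Δ j (u i) σ₀ = M j) := by
    intro σ₀ hσ₀ hP₀ hPD₀
    have hdet0 : (Matrix.of fun i j : Fin (n + 1) => Mstar σ₀ (i.1 + j.1)).det = 0 := by
      rw [← hP]; exact hP₀
    obtain ⟨w, u, hw, hu, hrepN⟩ := construct_atoms hn0 (Mstar σ₀) hPD₀ hdet0
    refine ⟨w, u, hw, hu, ?_⟩
    have hTM' : ∀ j ≤ 2 * n,
        ∑ k ∈ Finset.range (j + 1), b k * σ₀ ^ k * (j.descFactorial k : ℝ) *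
          ((fun j' => ∑ i, w i * Δ j' (u i) σ₀) (j - k))
        = ∑ k ∈ Finset.range (j + 1), b k * σ₀ ^ k * (j.descFactorial k : ℝ) * M (j - k) := by
      intro j hj
      have e1 : ∑ k ∈ Finset.range (j + 1), b k * σ₀ ^ k * (j.descFactorial k : ℝ) *
          ((fun j' => ∑ i, w i * Δ j' (u i) σ₀) (j - k)) = ∑ i, w i * (u i) ^ j :=
        transform_atoms hm0 hb0 hconv σ₀ w u (fun j' i => Δ j' (u i) σ₀)
          (fun j' i => hΔexp j' (u i) σ₀ hσ₀) j
      rw [e1, ← hrepN j hj, hMstar]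
    intro j hj
    exact transform_inj hb0 σ₀ (fun j' => ∑ i, w i * Δ j' (u i) σ₀) M (2 * n)
      hTM' j hj
  constructor
  · rintro ⟨W, ⟨hWw, hWu, hWσ, hWM⟩, hWuniq⟩
    obtain ⟨hP0, hPD0⟩ := hrightOfW W.1 W.2.1 W.2.2 hWw hWu hWσ (fun j hj => hWM j hj)
    refine ⟨W.2.2, ⟨hWσ, hP0, hPD0⟩, ?_⟩
    rintro σ₁ ⟨hσ₁, hP₁, hPD₁⟩
    obtain ⟨w₁, u₁, hw₁, hu₁, hM₁⟩ := hWofσ σ₁ hσ₁ hP₁ hPD₁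
    have := hWuniq (w₁, u₁, σ₁) ⟨hw₁, hu₁, hσ₁, hM₁⟩
    exact congrArg (fun W => W.2.2) this
  · rintro ⟨σ₀, ⟨hσ₀, hP₀, hPD₀⟩, hσuniq⟩
    obtain ⟨w, u, hw, hu, hM'⟩ := hWofσ σ₀ hσ₀ hP₀ hPD₀
    refine ⟨(w, u, σ₀), ⟨hw, hu, hσ₀, hM'⟩, ?_⟩
    rintro ⟨w', u', σ'⟩ ⟨hw', hu', hσ', hM''⟩
    simp only at hw' hu' hσ' hM''
    obtain ⟨hP', hPD'⟩ := hrightOfW w' u' σ' hw' hu' hσ' hM''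
    have hσeq : σ' = σ₀ := hσuniq σ' ⟨hσ', hP', hPD'⟩
    subst hσeq
    have hrep1 : ∀ j, j + 1 ≤ 2 * n → ∑ i, w' i * u' i ^ j = Mstar σ' j :=
      fun j hj => (hforward w' u' σ' hσ' hM'' j (by omega)).symm
    have hrep2 : ∀ j, j + 1 ≤ 2 * n → ∑ i, w i * u i ^ j = Mstar σ' j :=
      fun j hj => (hforward w u σ' hσ₀ hM' j (by omega)).symm
    obtain ⟨hweq, hueq⟩ := atoms_unique hn0 (Mstar σ') hPD₀ w' u' w u hw' hw hu' hu hrep1 hrep2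
    rw [hweq, hueq]
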